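/- Let l be a real number with l ≥ 3, let b ∈ (−π/2, 0), and let φ be a real number with |φ| ≤ −b. Then (l − √(1 − cos⁴b/cos⁴φ))² > 2·(cos²φ + cos⁴b/cos⁴φ). -/
import Mathlib


open Real Set

/-- The key pointwise estimate for angular modes `l ≥ 3`:
`(l − √(1 − cos⁴b/cos⁴φ))² > 2(cos⁴φ + cos⁴b/cos⁴φ)`. -/
theorem key_pointwise_estimate
    (l : ℝ) (hl : 3 ≤ l)
    (b : ℝ) (hb : b ∈ Set.Ioo (-(π/2)) 0)
    (φ : ℝ) (hφ : |φ| ≤ -b) :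
    (l - Real.sqrt (1 - cos b ^ 4 / cos φ ^ 4)) ^ 2
      > 2 * (cos φ ^ 2 + cos b ^ 4 / cos φ ^ 4) := by
  obtain ⟨hb1, hb2⟩ := hb
  have hbpos : 0 < cos b := Real.cos_pos_of_mem_Ioo ⟨hb1, hb2.trans (by positivity)⟩
  have hblt1 : cos b < 1 := by
    have hs : sin b < 0 := Real.sin_neg_of_neg_of_neg_pi_lt hb2 (by linarith [Real.pi_pos])
    nlinarith [Real.sin_sq_add_cos_sq b]
  have hφle : |φ| ≤ π / 2 := le_trans hφ (by linarith)
  have hcosle : cos b ≤ cos φ := by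
    rw [← Real.cos_abs φ, ← Real.cos_neg b]
    apply Real.cos_le_cos_of_nonneg_of_le_pi (abs_nonneg φ) _ hφ
    have : -b ≤ π / 2 := by linarith
    linarith [Real.pi_pos]
  have hcpos : 0 < cos φ := lt_of_lt_of_le hbpos hcosle
  have hcle1 : cos φ ≤ 1 := Real.cos_le_one φ
  set t : ℝ := cos b ^ 4 / cos φ ^ 4 with ht
  have htpos : 0 < t := by positivity
  have htle1 : t ≤ 1 := by
    rw [ht, div_le_one (by positivity)]
    exact pow_le_pow_left₀ hbpos.le hcosle 4
  have hsum : cos φ ^ 2 + t < 2 := by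
    rcases lt_or_eq_of_le hcle1 with h | h
    · nlinarith
    · have : t < 1 := by
        rw [ht, div_lt_one (by positivity), h]
        calc cos b ^ 4 < 1 := pow_lt_one₀ hbpos.le hblt1 (by norm_num)
          _ = 1 ^ 4 := by norm_num
      nlinarith
  have hsqrt : Real.sqrt (1 - t) ≤ 1 := by
    have := Real.sqrt_le_sqrt (show 1 - t ≤ 1 by linarith)
    simpa using this
  have h2 : 2 ≤ l - Real.sqrt (1 - t) := by linarith
  nlinarith [Real.sqrt_nonneg (1 - t)]
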